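/- In a Banach lattice E, if p_{i,n} ∈ B_E with p_{i,n} ↓ 0 in n for each fixed i, and (α_i) is an absolutely summable real sequence, then the sequence p_n := Σ_{i=1}^∞ |α_i| p_{i,n} (norm-convergent series) satisfies p_n ↓ 0. -/

import Mathlib

open Filter Topology

private lemma nsmul_pow_two_semiclosed' {α : Type*} [Lattice α] [AddCommGroup α]
    [CovariantClass α α (· + ·) (· ≤ ·)] {a : α} :
    ∀ k : ℕ, 0 ≤ 2 ^ k • a → 0 ≤ a
  | 0, h => by simpa using h
  | k + 1, h => by
    rw [pow_succ, mul_nsmul] at h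
    exact nsmul_pow_two_semiclosed' k (nsmul_two_semiclosed h)

private lemma real_smul_nonneg' {E : Type*} [NormedAddCommGroup E] [Lattice E] [HasSolidNorm E] [IsOrderedAddMonoid E]
    [NormedSpace ℝ E]
    {c : ℝ} (hc : 0 ≤ c) {x : E} (hx : 0 ≤ x) : 0 ≤ c • x := by
  have hq : ∀ k : ℕ, 0 ≤ ((⌈c * 2 ^ k⌉₊ : ℝ) / 2 ^ k) • x := by
    intro k
    apply nsmul_pow_two_semiclosed' k
    have h : (2 ^ k : ℕ) • (((⌈c * 2 ^ k⌉₊ : ℝ) / 2 ^ k) • x) = (⌈c * 2 ^ k⌉₊ : ℕ) • x := by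
      rw [← Nat.cast_smul_eq_nsmul ℝ (2 ^ k), ← Nat.cast_smul_eq_nsmul ℝ ⌈c * 2 ^ k⌉₊,
        smul_smul]
      congr 1
      push_cast
      field_simp
    rw [h]
    exact nsmul_nonneg hx _
  have hconv : Tendsto (fun k : ℕ => (⌈c * 2 ^ k⌉₊ : ℝ) / 2 ^ k) atTop (𝓝 c) := by
    rw [tendsto_iff_dist_tendsto_zero]
    refine squeeze_zero (fun k => dist_nonneg) (fun k => ?_)
      (tendsto_pow_atTop_nhds_zero_of_lt_one (by norm_num) (by norm_num) :
        Tendsto (fun k : ℕ => ((2 : ℝ)⁻¹) ^ k) atTop (𝓝 0))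
    have h2 : (0 : ℝ) < 2 ^ k := by positivity
    have hnn : 0 ≤ c * 2 ^ k := by positivity
    have hup := (Nat.ceil_lt_add_one hnn).le
    have hlo := Nat.le_ceil (c * 2 ^ k)
    rw [Real.dist_eq, abs_of_nonneg (by rw [sub_nonneg, le_div_iff₀ h2]; exact hlo)]
    rw [sub_le_iff_le_add, div_le_iff₀ h2]
    calc (⌈c * 2 ^ k⌉₊ : ℝ) ≤ c * 2 ^ k + 1 := hup
      _ = ((2 : ℝ)⁻¹ ^ k + c) * 2 ^ k := by
          rw [add_mul, ← mul_pow]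
          norm_num [add_comm]
  exact ge_of_tendsto' (hconv.smul_const x) hq

private lemma real_smul_mono' {E : Type*} [NormedAddCommGroup E] [Lattice E] [HasSolidNorm E] [IsOrderedAddMonoid E]
    [NormedSpace ℝ E]
    {c : ℝ} (hc : 0 ≤ c) {x y : E} (h : x ≤ y) : c • x ≤ c • y := by
  rw [← sub_nonneg, ← smul_sub]
  exact real_smul_nonneg' hc (sub_nonneg.2 h)

/-- `p ↓ 0` : `p` is decreasing with infimum `0`. -/
def DownToZero {E : Type*} [Lattice E] [AddCommGroup E] (p : ℕ → E) : Prop :=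
  Antitone p ∧ IsGLB (Set.range p) 0

/-- in a Banach lattice, if `p_{i,·} ∈ B_E` with `p_{i,n} ↓_n 0`
for each `i` and `(α_i)` is absolutely summable, then
`p_n := Σ_i |α_i| p_{i,n}` satisfies `p_n ↓ 0`. -/
theorem weighted_sum_down_to_zero
    {E : Type*} [NormedAddCommGroup E] [Lattice E] [HasSolidNorm E] [IsOrderedAddMonoid E]
    [NormedSpace ℝ E] [CompleteSpace E]
    (p : ℕ → ℕ → E) (hball : ∀ i n, ‖p i n‖ ≤ 1)
    (hdown : ∀ i, DownToZero (fun n => p i n))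
    (α : ℕ → ℝ) (hsum : Summable fun i => |α i|) :
    DownToZero (fun n => ∑' i, |α i| • p i n) := by
  have hmono : ∀ i, Antitone (fun n => p i n) := fun i => (hdown i).1
  have hglb : ∀ i, IsGLB (Set.range fun n => p i n) 0 := fun i => (hdown i).2
  have hpos : ∀ i n, 0 ≤ p i n := fun i n => (hglb i).1 ⟨n, rfl⟩
  have hnorm : ∀ m n i, ‖|α (i + m)| • p (i + m) n‖ ≤ |α (i + m)| := by
    intro m n i
    rw [norm_smul, Real.norm_eq_abs, abs_abs]
    exact mul_le_of_le_one_right (abs_nonneg _) (hball _ _)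
  have hsummt : ∀ m : ℕ, Summable fun i => |α (i + m)| :=
    fun m => (summable_nat_add_iff m).2 hsum
  have hS : ∀ n m : ℕ, Summable fun i => |α (i + m)| • p (i + m) n := by
    intro n m
    exact Summable.of_norm
      (Summable.of_nonneg_of_le (fun i => norm_nonneg _) (hnorm m n) (hsummt m))
  set T : ℕ → ℕ → E := fun m n => ∑' i, |α (i + m)| • p (i + m) n with hT
  have hq_eq : ∀ n, (∑' i, |α i| • p i n) = T 0 n := by
    intro n; simp [hT]
  have hTmono : ∀ m : ℕ, Antitone (T m) := by
    intro m n₁ n₂ h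
    exact Summable.tsum_le_tsum (fun i => real_smul_mono' (abs_nonneg _) (hmono _ h)) (hS n₂ m) (hS n₁ m)
  have hTnonneg : ∀ m n, 0 ≤ T m n :=
    fun m n => tsum_nonneg fun i => real_smul_nonneg' (abs_nonneg _) (hpos _ _)
  have hdec : ∀ m n, T m n = |α m| • p m n + T (m + 1) n := by
    intro m n
    show (∑' i, |α (i + m)| • p (i + m) n) = |α m| • p m n + ∑' i, |α (i + (m + 1))| • p (i + (m + 1)) n
    rw [Summable.tsum_eq_zero_add (hS n m)]
    congr 1
    · norm_num
    · exact tsum_congr fun i => by rw [show i + 1 + m = i + (m + 1) from by omega]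
  have key : ∀ a : E, (∀ n, a ≤ T 0 n) → ∀ m n, a ≤ T m n := by
    intro a ha m
    induction m with
    | zero => exact ha
    | succ m ih =>
      intro n
      have hb : ∀ k, a - T (m + 1) n ≤ |α m| • p m (n + k) := by
        intro k
        have h1 : a ≤ |α m| • p m (n + k) + T (m + 1) (n + k) := (hdec m (n + k)) ▸ ih (n + k)
        have h2 : T (m + 1) (n + k) ≤ T (m + 1) n := hTmono (m + 1) (Nat.le_add_right n k)
        calc a - T (m + 1) n ≤ a - T (m + 1) (n + k) := sub_le_sub_left h2 a
          _ ≤ |α m| • p m (n + k) := sub_le_iff_le_add.2 h1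
      have hb0 : a - T (m + 1) n ≤ 0 := by
        set b := a - T (m + 1) n with hbdef
        rcases eq_or_lt_of_le (abs_nonneg (α m)) with hc | hc
        · simpa [← hc] using hb 0
        · have hbk : ∀ k, (|α m|)⁻¹ • b ≤ p m k := by
            intro k
            have h3 : p m (n + k) ≤ p m k := hmono m (Nat.le_add_left k n)
            have hb2 : b ≤ |α m| • p m k :=
              (hb k).trans (real_smul_mono' (abs_nonneg _) h3)
            calc (|α m|)⁻¹ • b ≤ (|α m|)⁻¹ • (|α m| • p m k) :=
                  real_smul_mono' (inv_nonneg.2 (abs_nonneg _)) hb2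
              _ = p m k := inv_smul_smul₀ hc.ne' _
          have h0 : (|α m|)⁻¹ • b ≤ 0 := by
            refine (hglb m).2 ?_
            rintro y ⟨k, rfl⟩
            exact hbk k
          calc b = |α m| • ((|α m|)⁻¹ • b) := (smul_inv_smul₀ hc.ne' b).symm
            _ ≤ |α m| • (0 : E) := real_smul_mono' (abs_nonneg _) h0
            _ = 0 := smul_zero _
      exact sub_nonpos.1 hb0
  constructor
  · intro n₁ n₂ h
    simp only [hq_eq]
    exact hTmono 0 h
  · constructor
    · rintro y ⟨n, rfl⟩
      simp only [hq_eq]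
      exact hTnonneg 0 n
    · intro b hb
      have hbq : ∀ n, b ≤ T 0 n := by
        intro n
        have := hb ⟨n, rfl⟩
        simpa [hq_eq] using this
      have haq : ∀ n, b ⊔ 0 ≤ T 0 n := fun n => sup_le (hbq n) (hTnonneg 0 n)
      have hA := key (b ⊔ 0) haq
      have h1 : ∀ m, ‖b ⊔ 0‖ ≤ ∑' i, |α (i + m)| := by
        intro m
        have h2 : (0 : E) ≤ b ⊔ 0 := le_sup_right
        have h3 : b ⊔ 0 ≤ T m 0 := hA m 0
        have hsolid : ‖b ⊔ 0‖ ≤ ‖T m 0‖ := by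
          apply HasSolidNorm.solid
          rw [abs_of_nonneg h2, abs_of_nonneg (hTnonneg m 0)]
          exact h3
        have hsn : Summable fun i => ‖|α (i + m)| • p (i + m) 0‖ :=
          Summable.of_nonneg_of_le (fun i => norm_nonneg _) (hnorm m 0) (hsummt m)
        refine hsolid.trans ((norm_tsum_le_tsum_norm hsn).trans ?_)
        exact Summable.tsum_le_tsum (hnorm m 0) hsn (hsummt m)
      have h2 : Tendsto (fun m => ∑' i, |α (i + m)|) atTop (𝓝 0) :=
        tendsto_sum_nat_add (fun i => |α i|)
      have h3 : ‖b ⊔ 0‖ ≤ 0 := ge_of_tendsto' h2 h1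
      have h4 : b ⊔ 0 = 0 := by rwa [← norm_le_zero_iff]
      calc b ≤ b ⊔ 0 := le_sup_left
        _ = 0 := h4
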